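/- Let G be an n-resource selection game whose cost functions f_1, …, f_n are continuous (in addition to being nondecreasing). Then a strong Nash equilibrium exists in G. -/

import Mathlib

open scoped NNReal

namespace RSG

/-- A consumption profile in an `n`-resource selection game: each nonempty type
`R ⊆ [n]` distributes its mass `μ R` among the resources in `R`. -/
def IsProfile (n : ℕ) (μ : Finset (Fin n) → ℝ≥0) (s : Finset (Fin n) → Fin n → ℝ≥0) : Prop :=
  (∀ R : Finset (Fin n), ∀ j : Fin n, j ∉ R → s R j = 0) ∧
  (∀ R : Finset (Fin n), R.Nonempty → ∑ j ∈ R, s R j = μ R)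

/-- The load on resource `j` in profile `s`. -/
def load (n : ℕ) (s : Finset (Fin n) → Fin n → ℝ≥0) (j : Fin n) : ℝ≥0 :=
  ∑ R : Finset (Fin n), s R j

/-- The cost of resource `j` in profile `s`. -/
def cost (n : ℕ) (f : Fin n → ℝ≥0 → ℝ) (s : Finset (Fin n) → Fin n → ℝ≥0) (j : Fin n) : ℝ :=
  f j (load n s j)

/-- A Nash equilibrium. -/
def IsNash (n : ℕ) (f : Fin n → ℝ≥0 → ℝ) (μ : Finset (Fin n) → ℝ≥0)
    (s : Finset (Fin n) → Fin n → ℝ≥0) : Prop :=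
  IsProfile n μ s ∧
  ∀ R : Finset (Fin n), ∀ k ∈ R, 0 < s R k → ∀ j ∈ R, cost n f s k ≤ cost n f s j

/-- A strong Nash equilibrium: a Nash equilibrium `s` such that there is no
consumption profile `s' ≠ s` in which every player who strictly increases its
consumption of some resource `k` (i.e. `s' R k > s R k`) pays, at `k` in `s'`,
strictly less than the common equilibrium cost `h^R` of its type
(expressed via: less than `cost s j` for every `j` in the support of `s R`). -/
def IsStrong (n : ℕ) (f : Fin n → ℝ≥0 → ℝ) (μ : Finset (Fin n) → ℝ≥0)
    (s : Finset (Fin n) → Fin n → ℝ≥0) : Prop :=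
  IsNash n f μ s ∧
  ¬ ∃ s' : Finset (Fin n) → Fin n → ℝ≥0, IsProfile n μ s' ∧ s' ≠ s ∧
    ∀ R : Finset (Fin n), ∀ k : Fin n, s R k < s' R k →
      ∀ j : Fin n, 0 < s R j → cost n f s' k < cost n f s j

end RSG

open RSG


/-- Row sums over `univ` of a profile. -/
lemma RSG.rowsum (n : ℕ) (μ : Finset (Fin n) → ℝ≥0) (s : Finset (Fin n) → Fin n → ℝ≥0)
    (hs : IsProfile n μ s) (R : Finset (Fin n)) :
    ∑ k, s R k = if R.Nonempty then μ R else 0 := by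
  rw [← Finset.sum_subset (Finset.subset_univ R) (fun j _ hj => hs.1 R j hj)]
  split
  · exact hs.2 R ‹_›
  · rename_i h
    rw [Finset.not_nonempty_iff_eq_empty] at h
    simp [h]

/-- Every Nash equilibrium of a resource selection game with nondecreasing
costs is a strong equilibrium. -/
lemma RSG.nash_isStrong (n : ℕ) (f : Fin n → ℝ≥0 → ℝ) (μ : Finset (Fin n) → ℝ≥0)
    (hmono : ∀ j, Monotone (f j)) (s : Finset (Fin n) → Fin n → ℝ≥0)
    (hs : IsNash n f μ s) : IsStrong n f μ s := by
  refine ⟨hs, ?_⟩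
  obtain ⟨hprof, hnash⟩ := hs
  rintro ⟨s', hprof', hne, hcond⟩
  have core : ∀ R k, s R k < s' R k → load n s k ≤ load n s' k → False := by
    intro R k hk hload
    have hkR : k ∈ R := by
      by_contra h
      have h0 := hprof'.1 R k h
      exact absurd (h0 ▸ hk) (by simp)
    have hRne : R.Nonempty := ⟨k, hkR⟩
    have hsupp : ∃ j ∈ R, 0 < s R j := by
      by_contra h
      push_neg at h
      have hμ : μ R = 0 := by
        rw [← hprof.2 R hRne]
        exact Finset.sum_eq_zero fun i hi => le_antisymm (h i hi) (zero_le)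
      have hz : ∑ i ∈ R, s' R i = 0 := by rw [hprof'.2 R hRne, hμ]
      have h0 : s' R k = 0 := Finset.sum_eq_zero_iff.mp hz k hkR
      exact absurd (h0 ▸ hk) (by simp)
    obtain ⟨j, hjR, hj⟩ := hsupp
    have h1 : cost n f s' k < cost n f s j := hcond R k hk j hj
    have h2 : cost n f s j ≤ cost n f s k := hnash R j hjR hj k hkR
    have h3 : cost n f s k ≤ cost n f s' k := hmono k hload
    linarith
  by_cases hA : ∃ k, load n s k < load n s' k
  · obtain ⟨k, hk⟩ := hA
    have : ∃ R, s R k < s' R k := by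
      by_contra h
      push_neg at h
      exact absurd (Finset.sum_le_sum fun R _ => h R) (not_le.mpr hk)
    obtain ⟨R, hR⟩ := this
    exact core R k hR hk.le
  · push_neg at hA
    have htot : ∑ k, load n s' k = ∑ k, load n s k := by
      unfold load
      rw [Finset.sum_comm, Finset.sum_comm (γ := Fin n)]
      rw [Finset.sum_congr rfl fun R _ => rowsum n μ s' hprof' R,
        Finset.sum_congr rfl fun R _ => rowsum n μ s hprof R]
    have hloadeq : ∀ k, load n s' k = load n s k :=
      fun k => (Finset.sum_eq_sum_iff_of_le (fun i _ => hA i)).mp htot k (Finset.mem_univ k)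
    obtain ⟨R, hRne'⟩ : ∃ R, s' R ≠ s R := by
      by_contra h; push_neg at h; exact hne (funext h)
    have hrow : ∑ i, s R i = ∑ i, s' R i := by
      rw [rowsum n μ s hprof R, rowsum n μ s' hprof' R]
    obtain ⟨k, hk⟩ : ∃ k, s R k < s' R k := by
      by_contra h
      push_neg at h
      exact hRne' (funext fun i =>
        (Finset.sum_eq_sum_iff_of_le (fun i _ => h i)).mp hrow.symm i (Finset.mem_univ i))
    exact core R k hk (hloadeq k).symm.le



lemma RSG.exists_nash (n : ℕ) (f : Fin n → ℝ≥0 → ℝ) (μ : Finset (Fin n) → ℝ≥0)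
    (hmono : ∀ j, Monotone (f j)) (hcont : ∀ j, Continuous (f j)) :
    ∃ s : Finset (Fin n) → Fin n → ℝ≥0, IsNash n f μ s := by
  classical
  set g : Fin n → ℝ → ℝ := fun j x => f j (Real.toNNReal x) with hgdef
  have hgc : ∀ j, Continuous (g j) := fun j => (hcont j).comp continuous_real_toNNReal
  have hgm : ∀ j, Monotone (g j) := fun j => (hmono j).comp fun _ _ h => Real.toNNReal_mono h
  set F : Fin n → ℝ → ℝ := fun j x => ∫ t in (0:ℝ)..x, g j t with hFdef
  have hFc : ∀ j, Continuous (F j) := fun j =>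
    intervalIntegral.continuous_primitive (fun a b => (hgc j).intervalIntegrable a b) 0
  -- integral bounds
  have hFub : ∀ j (a y : ℝ), a ≤ y → F j y - F j a ≤ (y - a) * g j y := by
    intro j a y hay
    have : F j y = F j a + ∫ t in a..y, g j t := by
      rw [hFdef]
      exact (intervalIntegral.integral_add_adjacent_intervals
        ((hgc j).intervalIntegrable 0 a) ((hgc j).intervalIntegrable a y)).symm
    rw [this]
    have h1 : (∫ t in a..y, g j t) ≤ ∫ t in a..y, g j y :=
      intervalIntegral.integral_mono_on hay ((hgc j).intervalIntegrable a y)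
        intervalIntegrable_const (fun x hx => hgm j hx.2)
    simpa [intervalIntegral.integral_const, smul_eq_mul] using h1
  have hFlb : ∀ j (a y : ℝ), a ≤ y → (y - a) * g j a ≤ F j y - F j a := by
    intro j a y hay
    have : F j y = F j a + ∫ t in a..y, g j t := by
      rw [hFdef]
      exact (intervalIntegral.integral_add_adjacent_intervals
        ((hgc j).intervalIntegrable 0 a) ((hgc j).intervalIntegrable a y)).symm
    rw [this]
    have h1 : (∫ t in a..y, g j a) ≤ ∫ t in a..y, g j t :=
      intervalIntegral.integral_mono_on hay intervalIntegrable_const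
        ((hgc j).intervalIntegrable a y) (fun x hx => hgm j hx.1)
    simpa [intervalIntegral.integral_const, smul_eq_mul] using h1
  set X := (Finset (Fin n) → Fin n → ℝ≥0)
  set Φ : X → ℝ := fun s => ∑ j, F j (load n s j) with hΦdef
  have happly : ∀ (R : Finset (Fin n)) (j : Fin n), Continuous fun s : X => s R j :=
    fun R j => (continuous_apply j).comp (continuous_apply R)
  have hloadc : ∀ j, Continuous fun s : X => (load n s j : ℝ) := by
    intro j
    exact NNReal.continuous_coe.comp (continuous_finset_sum _ fun R _ => happly R j)
  have hΦc : Continuous Φ := by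
    apply continuous_finset_sum
    intro j _
    exact (hFc j).comp (hloadc j)
  set S : Set X := {s | IsProfile n μ s} with hSdef
  -- S nonempty
  have hSne : S.Nonempty := by
    refine ⟨fun R j => if h : R.Nonempty then (if j = R.min' h then μ R else 0) else 0, ?_, ?_⟩
    · intro R j hj
      by_cases h : R.Nonempty
      · simp only [dif_pos h]
        rw [if_neg]
        rintro rfl
        exact hj (R.min'_mem h)
      · simp [h]
    · intro R hR
      simp only [dif_pos hR]
      rw [Finset.sum_ite_eq' R (R.min' hR) (fun _ => μ R), if_pos (R.min'_mem hR)]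
  -- S compact
  have hSclosed : IsClosed S := by
    have h1 : IsClosed {s : X | ∀ R : Finset (Fin n), ∀ j : Fin n, j ∉ R → s R j = 0} := by
      simp_rw [Set.setOf_forall]
      exact isClosed_iInter fun R => isClosed_iInter fun j => isClosed_iInter fun _ =>
        isClosed_eq (happly R j) continuous_const
    have h2 : IsClosed {s : X | ∀ R : Finset (Fin n), R.Nonempty → ∑ j ∈ R, s R j = μ R} := by
      simp_rw [Set.setOf_forall]
      exact isClosed_iInter fun R => isClosed_iInter fun _ =>
        isClosed_eq (continuous_finset_sum _ fun j _ => happly R j) continuous_const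
    exact h1.inter h2
  have hScompact : IsCompact S := by
    refine (isCompact_univ_pi (fun R => isCompact_univ_pi fun j =>
      isCompact_Icc (a := (0:ℝ≥0)) (b := μ R))).of_isClosed_subset hSclosed ?_
    intro s hs
    simp only [Set.mem_univ_pi, Set.mem_Icc]
    intro R j
    refine ⟨zero_le, ?_⟩
    by_cases hj : j ∈ R
    · rw [← hs.2 R ⟨j, hj⟩]
      exact Finset.single_le_sum (fun i _ => zero_le) hj
    · rw [hs.1 R j hj]; exact zero_le
  obtain ⟨s, hsS, hmin⟩ := hScompact.exists_isMinOn hSne hΦc.continuousOn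
  refine ⟨s, hsS, ?_⟩
  intro R k hkR hk j hjR
  by_contra hlt
  push_neg at hlt
  have hkj : k ≠ j := by rintro rfl; exact lt_irrefl _ hlt
  -- notation
  set a : ℝ := (load n s j : ℝ) with hadef
  set b : ℝ := (load n s k : ℝ) with hbdef
  have hcostlt : f j (load n s j) < f k (load n s k) := hlt
  set c : ℝ := f k (load n s k) - f j (load n s j) with hcdef
  have hc : 0 < c := by simp [hcdef]; linarith
  -- continuity moduli
  obtain ⟨δ1, hδ1, hδ1'⟩ := Metric.continuousAt_iff.mp ((hgc j).continuousAt (x := a)) (c/2) (by linarith)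
  obtain ⟨δ2, hδ2, hδ2'⟩ := Metric.continuousAt_iff.mp ((hgc k).continuousAt (x := b)) (c/2) (by linarith)
  set ε : ℝ≥0 := min (s R k) (Real.toNNReal (min δ1 δ2) / 2) with hεdef
  have hε0 : 0 < ε := by
    apply lt_min hk
    have : 0 < Real.toNNReal (min δ1 δ2) := Real.toNNReal_pos.mpr (lt_min hδ1 hδ2)
    positivity
  have hεk : ε ≤ s R k := min_le_left _ _
  have hεδ : (ε : ℝ) < min δ1 δ2 := by
    have h1 : (ε : ℝ) ≤ ((Real.toNNReal (min δ1 δ2) / 2 : ℝ≥0) : ℝ) := by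
      exact_mod_cast min_le_right (s R k) _
    have h2 : ((Real.toNNReal (min δ1 δ2) / 2 : ℝ≥0) : ℝ) = min δ1 δ2 / 2 := by
      rw [NNReal.coe_div, Real.coe_toNNReal _ (le_of_lt (lt_min hδ1 hδ2))]
      norm_num
    have h3 : min δ1 δ2 / 2 < min δ1 δ2 := by
      have := lt_min hδ1 hδ2; linarith
    linarith [h1.trans_eq h2]
  have hεδ1 : (ε : ℝ) < δ1 := lt_of_lt_of_le hεδ (min_le_left _ _)
  have hεδ2 : (ε : ℝ) < δ2 := lt_of_lt_of_le hεδ (min_le_right _ _)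
  have hεload : ε ≤ load n s k :=
    hεk.trans (Finset.single_le_sum (f := fun R' => s R' k) (fun _ _ => zero_le) (Finset.mem_univ R))
  -- the deviation
  set v : Fin n → ℝ≥0 :=
    Function.update (Function.update (s R) k (s R k - ε)) j (s R j + ε) with hvdef
  have hvj : v j = s R j + ε := Function.update_self _ _ _
  have hvk : v k = s R k - ε := by
    rw [hvdef, Function.update_of_ne hkj, Function.update_self]
  have hvi : ∀ i, i ≠ j → i ≠ k → v i = s R i := by
    intro i hij hik
    rw [hvdef, Function.update_of_ne hij, Function.update_of_ne hik]
  set s' : X := Function.update s R v with hs'def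
  have hs'R : s' R = v := Function.update_self _ _ _
  have hs'other : ∀ R', R' ≠ R → s' R' = s R' := fun R' h => Function.update_of_ne h _ _
  -- s' is a profile
  have hs'S : s' ∈ S := by
    constructor
    · intro R' i hi
      by_cases h : R' = R
      · subst h
        rw [hs'R, hvi i (fun hh => hi (hh ▸ hjR)) (fun hh => hi (hh ▸ hkR))]
        exact hsS.1 R' i hi
      · rw [hs'other R' h]; exact hsS.1 R' i hi
    · intro R' hR'
      by_cases h : R' = R
      · subst h
        rw [hs'R, hvdef]
        rw [Finset.sum_update_of_mem hjR]
        have hkmem : k ∈ R' \ {j} := Finset.mem_sdiff.mpr ⟨hkR, by simp [hkj]⟩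
        rw [Finset.sum_update_of_mem hkmem]
        have horig : ∑ i ∈ R', s R' i = s R' j + (s R' k + ∑ i ∈ (R' \ {j}) \ {k}, s R' i) := by
          rw [Finset.sum_eq_sum_sdiff_singleton_add hjR,
            Finset.sum_eq_sum_sdiff_singleton_add hkmem]
          ring
        have key : s R' j + ε + (s R' k - ε + ∑ i ∈ (R' \ {j}) \ {k}, s R' i)
            = s R' j + (s R' k + ∑ i ∈ (R' \ {j}) \ {k}, s R' i) := by
          have h1 : ε + (s R' k - ε) = s R' k := by
            rw [add_comm]; exact tsub_add_cancel_of_le hεk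
          calc s R' j + ε + (s R' k - ε + ∑ i ∈ (R' \ {j}) \ {k}, s R' i)
              = s R' j + (ε + (s R' k - ε)) + ∑ i ∈ (R' \ {j}) \ {k}, s R' i := by ring
            _ = s R' j + (s R' k + ∑ i ∈ (R' \ {j}) \ {k}, s R' i) := by rw [h1]; ring
        rw [key, ← horig]
        exact hsS.2 R' hR'
      · rw [hs'other R' h]; exact hsS.2 R' hR'
  -- loads of s'
  have hloadeq : ∀ i, load n s' i + s R i = load n s i + v i := by
    intro i
    have hcol : (fun R' => s' R' i) = Function.update (fun R' => s R' i) R (v i) := by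
      funext R'
      by_cases h : R' = R
      · subst h; rw [hs'R, Function.update_self]
      · rw [hs'other R' h, Function.update_of_ne h]
    have h1 : load n s' i = v i + ∑ R' ∈ Finset.univ \ {R}, s R' i := by
      unfold load
      rw [show (fun R' => s' R' i) = _ from hcol] at *
      exact Finset.sum_update_of_mem (Finset.mem_univ R) _ _
    have h2 : load n s i = s R i + ∑ R' ∈ Finset.univ \ {R}, s R' i := by
      unfold load
      rw [Finset.sum_eq_sum_sdiff_singleton_add (Finset.mem_univ R) (fun R' => s R' i)]
      ring
    rw [h1, h2]; ring
  have hlj : load n s' j = load n s j + ε := by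
    have := hloadeq j
    rw [hvj] at this
    have h2 : load n s' j + s R j = (load n s j + ε) + s R j := by rw [this]; ring
    exact add_right_cancel h2
  have hlk : load n s' k = load n s k - ε := by
    have := hloadeq k
    rw [hvk] at this
    have h2 : load n s k + (s R k - ε) = (load n s k - ε) + s R k := by
      have e1 : (load n s k - ε) + ε = load n s k := tsub_add_cancel_of_le hεload
      have e2 : (s R k - ε) + ε = s R k := tsub_add_cancel_of_le hεk
      calc load n s k + (s R k - ε) = ((load n s k - ε) + ε) + (s R k - ε) := by rw [e1]
        _ = (load n s k - ε) + ((s R k - ε) + ε) := by ring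
        _ = (load n s k - ε) + s R k := by rw [e2]
    have h3 : load n s' k + s R k = (load n s k - ε) + s R k := by rw [this, h2]
    exact add_right_cancel h3
  have hli : ∀ i, i ≠ j → i ≠ k → load n s' i = load n s i := by
    intro i hij hik
    have := hloadeq i
    rw [hvi i hij hik] at this
    exact add_right_cancel this
  -- potential difference
  have hdiff : Φ s' - Φ s
      = (F j ((load n s' j : ℝ)) - F j a) + (F k ((load n s' k : ℝ)) - F k b) := by
    rw [hΦdef]
    simp only
    rw [← Finset.sum_sub_distrib]
    rw [Finset.sum_eq_add_of_mem j k (Finset.mem_univ j) (Finset.mem_univ k) hkj.symm]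
    intro i _ hi
    rw [hli i hi.1 hi.2]
    ring
  have hlj' : (load n s' j : ℝ) = a + ε := by rw [hlj]; push_cast [hadef]; ring
  have hlk' : (load n s' k : ℝ) = b - ε := by rw [hlk, NNReal.coe_sub hεload]
  -- bounds
  have hεpos : (0:ℝ) < ε := hε0
  have hgja : g j a = f j (load n s j) := by
    rw [hgdef]; simp only [hadef, Real.toNNReal_coe]
  have hgkb : g k b = f k (load n s k) := by
    rw [hgdef]; simp only [hbdef, Real.toNNReal_coe]
  have hb1 : F j (a + ε) - F j a ≤ (ε : ℝ) * g j (a + ε) := by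
    have := hFub j a (a + ε) (by linarith)
    simpa using this
  have hg1 : g j (a + ε) < g j a + c/2 := by
    have hd : dist (a + (ε:ℝ)) a < δ1 := by
      rw [Real.dist_eq]; rw [abs_of_nonneg (by linarith)]; linarith
    have := hδ1' hd
    rw [Real.dist_eq, abs_lt] at this
    linarith [this.1, this.2]
  have hb2 : (ε : ℝ) * g k (b - ε) ≤ F k b - F k (b - ε) := by
    have := hFlb k (b - ε) b (by linarith)
    simpa using this
  have hg2 : g k b - c/2 < g k (b - ε) := by
    have hd : dist (b - (ε:ℝ)) b < δ2 := by
      rw [Real.dist_eq]; rw [abs_of_nonpos (by linarith)]; linarith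
    have := hδ2' hd
    rw [Real.dist_eq, abs_lt] at this
    linarith [this.1, this.2]
  have hfinal : Φ s' - Φ s < 0 := by
    rw [hdiff, hlj', hlk']
    have e1 : F k (b - ε) - F k b ≤ -((ε:ℝ) * g k (b - ε)) := by linarith
    have e2 : (ε:ℝ) * g j (a + ε) < (ε:ℝ) * (g j a + c/2) :=
      mul_lt_mul_of_pos_left hg1 hεpos
    have e3 : (ε:ℝ) * (g k b - c/2) < (ε:ℝ) * g k (b - ε) :=
      mul_lt_mul_of_pos_left hg2 hεpos
    have e4 : g j a + c/2 = g k b - c/2 := by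
      rw [hgja, hgkb, hcdef]; ring
    nlinarith
  have := hmin hs'S
  simp only [Set.mem_setOf_eq] at this
  linarith [this]

/-- In every `n`-resource selection game with continuous
(nondecreasing) cost functions, a strong Nash equilibrium exists. -/
theorem exists_strong_nash (n : ℕ) (hn : 0 < n) (f : Fin n → ℝ≥0 → ℝ)
    (μ : Finset (Fin n) → ℝ≥0)
    (hmono : ∀ j, Monotone (f j)) (hcont : ∀ j, Continuous (f j)) :
    ∃ s : Finset (Fin n) → Fin n → ℝ≥0, IsStrong n f μ s := by
  obtain ⟨s, hs⟩ := RSG.exists_nash n f μ hmono hcont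
  exact ⟨s, RSG.nash_isStrong n f μ hmono s hs⟩
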